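/- There exists a polynomial P with positive coefficients containing a strictly positive monomial in each variable (namely P = x₁ + x₁⁷x₂ + x₂⁷ on the 1-simplex) such that the Baum–Eagon map associated to P is not a homeomorphism of the simplex onto itself. -/

import Mathlib

open MvPolynomial

/-- The 1-simplex in `ℝ²` (coordinates indexed by `Fin 2`). -/
def delta1 : Set (Fin 2 → ℝ) := {x | (∀ i, 0 ≤ x i) ∧ x 0 + x 1 = 1}

/-- The Baum–Eagon map on the simplex for a polynomial `P` in two variables. -/
noncomputable def tauOf (P : MvPolynomial (Fin 2) ℝ) (x : Fin 2 → ℝ) : Fin 2 → ℝ :=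
  fun i => x i * eval x (pderiv i P) / ∑ j : Fin 2, x j * eval x (pderiv j P)

/-- The counterexample polynomial `P = x₀ + x₀⁷x₁ + x₁⁷`. -/
noncomputable def Pce : MvPolynomial (Fin 2) ℝ := X 0 + X 0 ^ 7 * X 1 + X 1 ^ 7

lemma Pce_eq : Pce = monomial (Finsupp.single 0 1) 1
    + monomial (Finsupp.single 0 7 + Finsupp.single 1 1) 1
    + monomial (Finsupp.single 1 7) 1 := by
  simp [Pce, X, monomial_pow, monomial_mul, Finsupp.smul_single]

lemma eval_pderiv0 (x : Fin 2 → ℝ) :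
    eval x (pderiv 0 Pce) = 1 + 7 * x 0 ^ 6 * x 1 := by
  simp [Pce, pderiv_mul, pderiv_pow]; ring

lemma eval_pderiv1 (x : Fin 2 → ℝ) :
    eval x (pderiv 1 Pce) = x 0 ^ 7 + 7 * x 1 ^ 6 := by
  simp [Pce, pderiv_mul, pderiv_pow]

/-- Numerator of the first coordinate of the Baum–Eagon map of `Pce`. -/
def nfc (t : ℝ) : ℝ := t * (1 + 7 * t ^ 6 * (1 - t))

/-- Denominator of the Baum–Eagon map of `Pce`. -/
def dfc (t : ℝ) : ℝ :=
  t * (1 + 7 * t ^ 6 * (1 - t)) + (1 - t) * (t ^ 7 + 7 * (1 - t) ^ 6)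

/-- First coordinate of the Baum–Eagon map of `Pce` along the simplex. -/
noncomputable def gc (t : ℝ) : ℝ := nfc t / dfc t

lemma dfc_pos {t : ℝ} (h0 : 0 ≤ t) (h1 : t ≤ 1) : 0 < dfc t := by
  have hs : (0:ℝ) ≤ 1 - t := by linarith
  rcases h0.lt_or_eq with ht | ht
  · have a1 : (0:ℝ) ≤ t ^ 6 := by positivity
    have a2 : (0:ℝ) ≤ t ^ 7 := by positivity
    have a3 : (0:ℝ) ≤ (1 - t) ^ 6 := pow_nonneg hs _
    simp only [dfc]
    nlinarith [mul_nonneg (mul_nonneg a1 hs) ht.le, mul_nonneg hs a2,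
      mul_nonneg hs a3]
  · simp [dfc, ← ht]

lemma tau_formula0 (t : ℝ) : tauOf Pce ![t, 1 - t] 0 = gc t := by
  simp [tauOf, Fin.sum_univ_two, eval_pderiv0, eval_pderiv1, gc, nfc, dfc]

lemma tau_formula1 {t : ℝ} (h0 : 0 ≤ t) (h1 : t ≤ 1) :
    tauOf Pce ![t, 1 - t] 1 = 1 - gc t := by
  have hD := dfc_pos h0 h1
  simp only [tauOf, Fin.sum_univ_two, eval_pderiv0, eval_pderiv1, gc, nfc]
  rw [Matrix.cons_val_zero, Matrix.cons_val_one, Matrix.cons_val_zero]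
  have hd : t * (1 + 7 * t ^ 6 * (1 - t)) + (1 - t) * (t ^ 7 + 7 * (1 - t) ^ 6) ≠ 0 := by
    have := hD; simp only [dfc] at this; linarith
  simp only [dfc]
  rw [eq_sub_iff_add_eq, ← add_div, div_eq_one_iff_eq hd]
  ring

lemma mem_delta1 {t : ℝ} (h0 : 0 ≤ t) (h1 : t ≤ 1) : ![t, 1 - t] ∈ delta1 := by
  refine ⟨fun i => ?_, by norm_num⟩
  fin_cases i <;> simp <;> linarith

lemma gc_continuousOn : ContinuousOn gc (Set.Icc 0 1) := by
  apply ContinuousOn.div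
  · unfold nfc; fun_prop
  · unfold dfc; fun_prop
  · exact fun t ht => (dfc_pos ht.1 ht.2).ne'

/-- **Counterexample to Baum's conjecture.** There exists a polynomial `P` with
non-negative coefficients which contains a monomial `c_i x_i^{w_i}` with `c_i > 0`,
`w_i > 0` for each variable (e.g. `P = x₁ + x₁⁷x₂ + x₂⁷`), whose associated
Baum–Eagon map is not a homeomorphism of the 1-simplex onto itself. -/
theorem exists_poly_baumEagon_not_homeomorph :
    ∃ P : MvPolynomial (Fin 2) ℝ,
      (∀ m, 0 ≤ P.coeff m) ∧
      (∀ i : Fin 2, ∃ w : ℕ, 0 < w ∧ 0 < P.coeff (Finsupp.single i w)) ∧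
      ¬ ∃ h : delta1 ≃ₜ delta1, ∀ p : delta1, (h p : Fin 2 → ℝ) = tauOf P p := by
  refine ⟨Pce, ?_, ?_, ?_⟩
  · intro m
    rw [Pce_eq]
    simp only [coeff_add, coeff_monomial]
    split_ifs <;> norm_num
  · have c0 : (0:ℝ) < Pce.coeff (Finsupp.single 0 1) := by
      rw [Pce_eq]
      simp only [coeff_add, coeff_monomial]
      have h1 : (Finsupp.single 0 7 + Finsupp.single 1 1 : Fin 2 →₀ ℕ) ≠ Finsupp.single 0 1 := by
        intro h
        have := DFunLike.congr_fun h 0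
        simp [Finsupp.single_apply] at this
      have h2 : (Finsupp.single 1 7 : Fin 2 →₀ ℕ) ≠ Finsupp.single 0 1 := by
        intro h
        have := DFunLike.congr_fun h 1
        simp [Finsupp.single_apply] at this
      simp [if_neg h1, if_neg h2]
    have c1 : (0:ℝ) < Pce.coeff (Finsupp.single 1 7) := by
      rw [Pce_eq]
      simp only [coeff_add, coeff_monomial]
      have h1 : (Finsupp.single 0 1 : Fin 2 →₀ ℕ) ≠ Finsupp.single 1 7 := by
        intro h
        have := DFunLike.congr_fun h 0
        simp [Finsupp.single_apply] at this
      have h2 : (Finsupp.single 0 7 + Finsupp.single 1 1 : Fin 2 →₀ ℕ) ≠ Finsupp.single 1 7 := by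
        intro h
        have := DFunLike.congr_fun h 0
        simp [Finsupp.single_apply] at this
      simp [if_neg h1, if_neg h2]
    intro i
    fin_cases i
    · exact ⟨1, one_pos, c0⟩
    · exact ⟨7, by norm_num, c1⟩
  · rintro ⟨h, hh⟩
    -- τ is injective on the simplex
    have hinj : ∀ p q : delta1, tauOf Pce p = tauOf Pce q → p = q := by
      intro p q e
      exact h.injective (Subtype.ext (by rw [hh p, hh q]; exact e))
    -- hence gc is injective on [0,1]
    have ginj : Set.InjOn gc (Set.Icc (0:ℝ) 1) := by
      intro a ha b hb e
      have pa := mem_delta1 ha.1 ha.2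
      have pb := mem_delta1 hb.1 hb.2
      have e0 : tauOf Pce ![a, 1 - a] 0 = tauOf Pce ![b, 1 - b] 0 := by
        rw [tau_formula0, tau_formula0, e]
      have e1 : tauOf Pce ![a, 1 - a] 1 = tauOf Pce ![b, 1 - b] 1 := by
        rw [tau_formula1 ha.1 ha.2, tau_formula1 hb.1 hb.2, e]
      have etau : tauOf Pce ![a, 1 - a] = tauOf Pce ![b, 1 - b] := by
        funext i
        fin_cases i
        · exact e0
        · exact e1
      have hpq := hinj ⟨_, pa⟩ ⟨_, pb⟩ etau
      have hv : (![a, 1 - a] : Fin 2 → ℝ) = ![b, 1 - b] := congrArg Subtype.val hpq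
      simpa using congrFun hv 0
    -- numeric facts
    have hb1 : gc (9/10) < 193/200 := by
      have hD : (0:ℝ) < dfc (9/10) := dfc_pos (by norm_num) (by norm_num)
      rw [gc, div_lt_iff₀ hD]
      simp only [nfc, dfc]
      norm_num
    have ha1 : (193:ℝ)/200 < gc (7/10) := by
      have hD : (0:ℝ) < dfc (7/10) := dfc_pos (by norm_num) (by norm_num)
      rw [gc, lt_div_iff₀ hD]
      simp only [nfc, dfc]
      norm_num
    have h1 : gc 1 = 1 := by norm_num [gc, nfc, dfc]
    -- IVT on [7/10, 9/10] (decreasing direction)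
    obtain ⟨c, hc, hgc⟩ :=
      intermediate_value_Icc' (by norm_num : (7:ℝ)/10 ≤ 9/10)
        (gc_continuousOn.mono (Set.Icc_subset_Icc (by norm_num) (by norm_num)))
        (Set.mem_Icc.2 ⟨hb1.le, ha1.le⟩)
    -- IVT on [9/10, 1]
    obtain ⟨d, hd, hgd⟩ :=
      intermediate_value_Icc (by norm_num : (9:ℝ)/10 ≤ 1)
        (gc_continuousOn.mono (Set.Icc_subset_Icc (by norm_num) (by norm_num)))
        (Set.mem_Icc.2 ⟨hb1.le, by rw [h1]; norm_num⟩)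
    have hc01 : c ∈ Set.Icc (0:ℝ) 1 := ⟨by linarith [hc.1], by linarith [hc.2]⟩
    have hd01 : d ∈ Set.Icc (0:ℝ) 1 := ⟨by linarith [hd.1], hd.2⟩
    have hcd : c = d := ginj hc01 hd01 (by rw [hgc, hgd])
    have hc9 : c = 9/10 := le_antisymm hc.2 (hcd ▸ hd.1)
    rw [hc9] at hgc
    linarith [hb1, hgc.symm.le]
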